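/- Let f, g be Laurent polynomials in n variables with positive coefficients such that the Newton polytope of g is n-dimensional and contains the Newton polytope of f in its interior. Then the integral ∫_{ℝ^n_{>0}} (f(t)/g(t)) dt₁/t₁ ∧ ⋯ ∧ dt_n/t_n converges (is finite). -/

import Mathlib

open MeasureTheory

section helpers

lemma h1d_integrable {δ : ℝ} (hδ : 0 < δ) :
    Integrable ((Set.Ioi (0:ℝ)).indicator fun s => Real.exp (-δ * |Real.log s|) * s⁻¹) := by
  rw [integrable_indicator_iff measurableSet_Ioi]
  have : Set.Ioc (0:ℝ) 1 ∪ Set.Ioi 1 = Set.Ioi 0 := Set.Ioc_union_Ioi_eq_Ioi zero_le_one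
  rw [← this]
  apply MeasureTheory.IntegrableOn.union
  · have base : IntegrableOn (fun s : ℝ => s ^ (δ - 1)) (Set.Ioc (0:ℝ) 1) volume := by
      have := intervalIntegral.intervalIntegrable_rpow' (r := δ - 1) (by linarith) (a := 0) (b := 1)
      simpa [intervalIntegrable_iff, Set.uIoc_of_le (zero_le_one (α := ℝ))] using this
    apply base.congr_fun ?_ measurableSet_Ioc
    intro s hs
    have hs0 : 0 < s := hs.1
    have hlog : Real.log s ≤ 0 := Real.log_nonpos hs0.le hs.2
    show s ^ (δ - 1) = Real.exp (-δ * |Real.log s|) * s⁻¹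
    rw [abs_of_nonpos hlog]
    rw [Real.rpow_sub hs0, Real.rpow_one, Real.rpow_def_of_pos hs0]
    ring_nf
  · have base : IntegrableOn (fun s : ℝ => s ^ (-δ - 1)) (Set.Ioi (1:ℝ)) volume :=
      integrableOn_Ioi_rpow_of_lt (by linarith) zero_lt_one
    apply base.congr_fun ?_ measurableSet_Ioi
    intro s hs
    have hs0 : (0:ℝ) < s := lt_trans zero_lt_one hs
    have hlog : 0 ≤ Real.log s := Real.log_nonneg (le_of_lt hs)
    show s ^ (-δ - 1) = Real.exp (-δ * |Real.log s|) * s⁻¹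
    rw [abs_of_nonneg hlog]
    rw [Real.rpow_sub hs0, Real.rpow_one, Real.rpow_def_of_pos hs0]
    rw [mul_comm (Real.log s) (-δ), div_eq_mul_inv]

lemma zpow_prod_eq_exp {n : ℕ} {t : Fin n → ℝ} (ht : ∀ i, 0 < t i) (b : Fin n → ℤ) :
    ∏ i, t i ^ (b i) = Real.exp (∑ i, (b i : ℝ) * Real.log (t i)) := by
  rw [Real.exp_sum]
  refine Finset.prod_congr rfl fun i _ => ?_
  rw [← Real.rpow_intCast (t i) (b i), Real.rpow_def_of_pos (ht i), mul_comm]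

lemma key_amgm {n : ℕ} (Sg : Finset (Fin n → ℤ)) (cg : (Fin n → ℤ) → ℝ) {m : ℝ} (hm : 0 < m)
    (hcg : ∀ b ∈ Sg, m ≤ cg b) {c : Fin n → ℝ}
    (hc : c ∈ convexHull ℝ ((fun a : Fin n → ℤ => fun i => (a i : ℝ)) '' (Sg : Set (Fin n → ℤ))))
    {t : Fin n → ℝ} (ht : ∀ i, 0 < t i) :
    Real.exp (∑ i, c i * Real.log (t i)) ≤ m⁻¹ * ∑ b ∈ Sg, cg b * ∏ i, t i ^ (b i) := by
  set φ : (Fin n → ℤ) → (Fin n → ℝ) := fun a => fun i => (a i : ℝ) with hφ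
  set z : (Fin n → ℝ) → ℝ := fun y => Real.exp (∑ i, y i * Real.log (t i)) with hz
  have hzpos : ∀ y, 0 < z y := fun y => Real.exp_pos _
  rw [← Finset.coe_image] at hc
  rw [Finset.convexHull_eq] at hc
  obtain ⟨w, hw0, hw1, hcc⟩ := hc
  rw [Finset.centerMass_eq_of_sum_1 _ _ hw1] at hcc
  set T := Sg.image φ with hT
  -- c i = ∑ y in T, w y * y i
  have hci : ∀ i, c i = ∑ y ∈ T, w y * y i := by
    intro i
    rw [← hcc]
    simp [Finset.sum_apply]
  have key : Real.exp (∑ i, c i * Real.log (t i)) = ∏ y ∈ T, z y ^ (w y) := by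
    have : ∑ i, c i * Real.log (t i) = ∑ y ∈ T, w y * ∑ i, y i * Real.log (t i) := by
      simp_rw [hci, Finset.sum_mul]
      rw [Finset.sum_comm]
      congr 1; ext y
      rw [Finset.mul_sum]
      congr 1; ext i; ring
    rw [this, Real.exp_sum]
    refine Finset.prod_congr rfl fun y _ => ?_
    show Real.exp (w y * ∑ i, y i * Real.log (t i)) = z y ^ (w y)
    rw [ ← Real.exp_log (hzpos y), Real.log_exp, Real.rpow_def_of_pos (Real.exp_pos _),
      Real.log_exp, mul_comm]
  rw [key]
  calc ∏ y ∈ T, z y ^ (w y) ≤ ∑ y ∈ T, w y * z y :=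
        Real.geom_mean_le_arith_mean_weighted T w z hw0 hw1 (fun y _ => (hzpos y).le)
    _ = ∑ b ∈ Sg, w (φ b) * z (φ b) := by
        refine Finset.sum_image fun x hx y hy h => ?_
        funext i
        have h2 := congrFun h i
        simp only [hφ] at h2
        exact_mod_cast h2
    _ ≤ ∑ b ∈ Sg, m⁻¹ * (cg b * z (φ b)) := by
        refine Finset.sum_le_sum fun b hb => ?_
        have hw_le : w (φ b) ≤ 1 := by
          rw [← hw1]
          exact Finset.single_le_sum hw0 (Finset.mem_image_of_mem φ hb)
        have h1 : (1:ℝ) ≤ m⁻¹ * cg b := by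
          rw [← inv_mul_cancel₀ hm.ne']
          exact mul_le_mul_of_nonneg_left (hcg b hb) (inv_nonneg.mpr hm.le)
        calc w (φ b) * z (φ b) ≤ 1 * z (φ b) :=
              mul_le_mul_of_nonneg_right hw_le (hzpos _).le
          _ ≤ (m⁻¹ * cg b) * z (φ b) := mul_le_mul_of_nonneg_right h1 (hzpos _).le
          _ = m⁻¹ * (cg b * z (φ b)) := by ring
    _ = m⁻¹ * ∑ b ∈ Sg, cg b * ∏ i, t i ^ (b i) := by
        rw [Finset.mul_sum]
        refine Finset.sum_congr rfl fun b hb => ?_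
        rw [zpow_prod_eq_exp ht b]

end helpers

/-- Theorem 2.4 (dehomogenized): for Laurent polynomials `f, g` with positive
coefficients such that the Newton polytope of `g` contains that of `f` in its
interior (in particular `N(g)` is full-dimensional), the integral
`∫_{ℝ^n_{>0}} (f/g) dt₁/t₁ ∧ ⋯ ∧ dt_n/t_n` converges. -/
theorem convergence_of_toric_integral {n : ℕ}
    (Sf Sg : Finset (Fin n → ℤ)) (hSf : Sf.Nonempty) (hSg : Sg.Nonempty)
    (cf cg : (Fin n → ℤ) → ℝ)
    (hcf : ∀ a ∈ Sf, 0 < cf a) (hcg : ∀ a ∈ Sg, 0 < cg a)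
    (hNewton : convexHull ℝ
        ((fun a : Fin n → ℤ => fun i => (a i : ℝ)) '' (Sf : Set (Fin n → ℤ)))
      ⊆ interior (convexHull ℝ
        ((fun a : Fin n → ℤ => fun i => (a i : ℝ)) '' (Sg : Set (Fin n → ℤ))))) :
    IntegrableOn
      (fun t : Fin n → ℝ =>
        ((∑ a ∈ Sf, cf a * ∏ i, t i ^ (a i)) /
         (∑ a ∈ Sg, cg a * ∏ i, t i ^ (a i))) * ∏ i, (t i)⁻¹)
      {t : Fin n → ℝ | ∀ i, 0 < t i} volume := by
  set S : Set (Fin n → ℝ) := {t | ∀ i, 0 < t i} with hS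
  have hSopen : IsOpen S := by
    have : S = ⋂ i, (fun t : Fin n → ℝ => t i) ⁻¹' Set.Ioi 0 := by
      ext t; simp [hS]
    rw [this]
    exact isOpen_iInter_of_finite fun i => (continuous_apply i).isOpen_preimage _ isOpen_Ioi
  have hSmeas : MeasurableSet S := hSopen.measurableSet
  set m : ℝ := Sg.inf' hSg cg with hm_def
  have hm : 0 < m := (Finset.lt_inf'_iff hSg).mpr hcg
  have hm_le : ∀ b ∈ Sg, m ≤ cg b := fun b hb => Finset.inf'_le _ hb
  set g : (Fin n → ℝ) → ℝ := fun t => ∑ b ∈ Sg, cg b * ∏ i, t i ^ (b i) with hg_def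
  have hgpos : ∀ t ∈ S, 0 < g t := fun t ht =>
    Finset.sum_pos (fun b hb => mul_pos (hcg b hb)
      (Finset.prod_pos fun i _ => zpow_pos (ht i) _)) hSg
  have hsplit : ∀ t : Fin n → ℝ,
      ((∑ a ∈ Sf, cf a * ∏ i, t i ^ (a i)) / g t) * ∏ i, (t i)⁻¹
        = ∑ a ∈ Sf, cf a * (((∏ i, t i ^ (a i)) / g t) * ∏ i, (t i)⁻¹) := by
    intro t
    rw [Finset.sum_div, Finset.sum_mul]
    exact Finset.sum_congr rfl fun a _ => by ring
  rw [show (fun t : Fin n → ℝ => ((∑ a ∈ Sf, cf a * ∏ i, t i ^ (a i)) /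
      (∑ a ∈ Sg, cg a * ∏ i, t i ^ (a i))) * ∏ i, (t i)⁻¹)
      = fun t => ∑ a ∈ Sf, cf a * (((∏ i, t i ^ (a i)) / g t) * ∏ i, (t i)⁻¹) from funext hsplit]
  refine integrable_finset_sum _ fun a ha => Integrable.const_mul ?_ _
  -- per-monomial integrability
  have hmem : (fun i => (a i : ℝ)) ∈ interior (convexHull ℝ
      ((fun a : Fin n → ℤ => fun i => (a i : ℝ)) '' (Sg : Set (Fin n → ℤ)))) :=
    hNewton (subset_convexHull ℝ _ (Set.mem_image_of_mem _ ha))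
  obtain ⟨ε, hε, hball⟩ := Metric.mem_nhds_iff.mp (mem_interior_iff_mem_nhds.mp hmem)
  set δ : ℝ := ε / 2 with hδ_def
  have hδ : 0 < δ := by positivity
  -- dominating function
  set h1 : ℝ → ℝ := (Set.Ioi (0:ℝ)).indicator fun s => Real.exp (-δ * |Real.log s|) * s⁻¹
    with hh1
  set G : (Fin n → ℝ) → ℝ := fun t => m⁻¹ * ∏ i, h1 (t i) with hG
  have hGint : Integrable G :=
    (Integrable.fintype_prod (f := fun _ : Fin n => h1) fun _ => h1d_integrable hδ).const_mul m⁻¹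
  -- continuity
  have hcont : ContinuousOn
      (fun t : Fin n → ℝ => ((∏ i, t i ^ (a i)) / g t) * ∏ i, (t i)⁻¹) S := by
    intro t ht
    apply ContinuousAt.continuousWithinAt
    have hmono : ∀ b : Fin n → ℤ, ContinuousAt (fun t : Fin n → ℝ => ∏ i, t i ^ (b i)) t := by
      intro b
      refine tendsto_finset_prod _ fun i _ => ?_
      exact (continuous_apply i).continuousAt.zpow₀ _ (Or.inl (ht i).ne')
    have hnum : ContinuousAt (fun t : Fin n → ℝ => ∏ i, t i ^ (a i)) t := hmono a
    have hden : ContinuousAt g t :=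
      tendsto_finset_sum _ fun b _ => continuousAt_const.mul (hmono b)
    have hinv : ContinuousAt (fun t : Fin n → ℝ => ∏ i, (t i)⁻¹) t :=
      tendsto_finset_prod _ fun i _ =>
        ((continuous_apply i).continuousAt.inv₀ (ht i).ne')
    exact ((hnum.div hden (hgpos t ht).ne')).mul hinv
  refine Integrable.mono' hGint.integrableOn (hcont.aestronglyMeasurable hSmeas) ?_
  rw [ae_restrict_iff' hSmeas]
  filter_upwards with t ht
  -- pointwise bound
  have htpos : ∀ i, 0 < t i := ht
  set x : Fin n → ℝ := fun i => Real.log (t i) with hx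
  set σ : Fin n → ℝ := fun i => if 0 ≤ x i then 1 else -1 with hσ
  have hσabs : ∀ i, |σ i| = 1 := by
    intro i; by_cases hxi : 0 ≤ x i <;> simp [hσ, hxi]
  have hσx : ∀ i, σ i * x i = |x i| := by
    intro i
    by_cases hxi : 0 ≤ x i
    · simp [hσ, hxi, abs_of_nonneg hxi]
    · push_neg at hxi
      simp [hσ, not_le.mpr hxi, abs_of_neg hxi]
  set c : Fin n → ℝ := fun i => (a i : ℝ) + δ * σ i with hc_def
  have hcK : c ∈ convexHull ℝ
      ((fun a : Fin n → ℤ => fun i => (a i : ℝ)) '' (Sg : Set (Fin n → ℤ))) := by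
    apply hball
    rw [Metric.mem_ball]
    have : dist c (fun i => (a i : ℝ)) ≤ δ := by
      rw [dist_pi_le_iff hδ.le]
      intro i
      rw [Real.dist_eq]
      have : c i - (a i : ℝ) = δ * σ i := by rw [hc_def]; ring
      rw [this, abs_mul, hσabs i, abs_of_nonneg hδ.le, mul_one]
    linarith [this, half_lt_self hε]
  have hkey := key_amgm Sg cg hm hm_le hcK htpos
  have hsum : ∑ i, c i * Real.log (t i)
      = (∑ i, (a i : ℝ) * x i) + δ * ∑ i, |x i| := by
    rw [Finset.mul_sum, ← Finset.sum_add_distrib]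
    refine Finset.sum_congr rfl fun i _ => ?_
    rw [hc_def, ← hσx i]
    show (↑(a i) + δ * σ i) * x i = ↑(a i) * x i + δ * (σ i * x i)
    ring
  have hta : (∏ i, t i ^ (a i)) = Real.exp (∑ i, (a i : ℝ) * x i) :=
    zpow_prod_eq_exp htpos a
  have hbound : (∏ i, t i ^ (a i)) / g t ≤ m⁻¹ * Real.exp (-(δ * ∑ i, |x i|)) := by
    rw [div_le_iff₀ (hgpos t ht)]
    have h2 : Real.exp ((∑ i, (a i : ℝ) * x i) + δ * ∑ i, |x i|) ≤ m⁻¹ * g t := by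
      rw [← hsum]; exact hkey
    rw [Real.exp_add] at h2
    have h3 : (∏ i, t i ^ (a i))
        ≤ m⁻¹ * g t * Real.exp (-(δ * ∑ i, |x i|)) := by
      rw [hta, Real.exp_neg, ← div_eq_mul_inv]
      exact (le_div_iff₀ (Real.exp_pos _)).mpr h2
    exact h3.trans_eq (by ring)
  -- compute G t
  have hGt : G t = m⁻¹ * Real.exp (-(δ * ∑ i, |x i|)) * ∏ i, (t i)⁻¹ := by
    rw [hG]
    have : ∀ i, h1 (t i) = Real.exp (-δ * |x i|) * (t i)⁻¹ := by
      intro i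
      rw [hh1]
      exact Set.indicator_of_mem (Set.mem_Ioi.mpr (htpos i)) _
    simp only [this]
    rw [Finset.prod_mul_distrib, ← Real.exp_sum]
    have h6 : ∑ i, -δ * |x i| = -(δ * ∑ i, |x i|) := by
      rw [neg_mul_eq_neg_mul, Finset.mul_sum]
    rw [h6, mul_assoc]
  -- conclude
  have hnonneg : 0 ≤ ((∏ i, t i ^ (a i)) / g t) * ∏ i, (t i)⁻¹ := by
    apply mul_nonneg
    · exact div_nonneg (Finset.prod_nonneg fun i _ => (zpow_pos (htpos i) _).le) (hgpos t ht).le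
    · exact Finset.prod_nonneg fun i _ => (inv_nonneg.mpr (htpos i).le)
  rw [Real.norm_eq_abs, abs_of_nonneg hnonneg, hGt]
  exact mul_le_mul_of_nonneg_right hbound
    (Finset.prod_nonneg fun i _ => (inv_nonneg.mpr (htpos i).le))
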